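/- Let d ∈ ℕ with d ≥ 3 and ε ∈ (0,1). Then the bracketing number of the family R_d of all half-open axis-parallel boxes in [0,1]^d satisfies N_[](ε, R_d, ‖·‖_{L¹}) ≤ ((d^d/d!) · (2/ε)^d)² = (d^d/d!)² · 2^{2d} · ε^{−2d}. -/

import Mathlib

open Finset MeasureTheory

/-- The half-open axis-parallel box `[y, z) = ∏_j [y_j, z_j)` in `ℝ^d`. -/
def box (d : ℕ) (y z : Fin d → ℝ) : Set (Fin d → ℝ) :=
  Set.univ.pi fun j => Set.Ico (y j) (z j)

/-- `B` is an `ε`-bracketing cover of the family `R_d` of half-open boxes in `[0,1]^d`: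
a finite set of pairs of boxes `(R⁻, R⁺)` (given by their corner points in `[0,1]^d`)
with `R⁻ ⊆ R⁺` and `λ^d(R⁺) - λ^d(R⁻) ≤ ε`, such that every box `[y, z)` with
`y, z ∈ [0,1]^d` satisfies `R⁻ ⊆ [y, z) ⊆ R⁺` for some pair in `B`. -/
def IsBracketingCoverR (d : ℕ) (ε : ℝ)
    (B : Finset (((Fin d → ℝ) × (Fin d → ℝ)) × ((Fin d → ℝ) × (Fin d → ℝ)))) : Prop :=
  (∀ p ∈ B, p.1.1 ∈ Set.Icc (0 : Fin d → ℝ) 1 ∧ p.1.2 ∈ Set.Icc (0 : Fin d → ℝ) 1 ∧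
    p.2.1 ∈ Set.Icc (0 : Fin d → ℝ) 1 ∧ p.2.2 ∈ Set.Icc (0 : Fin d → ℝ) 1 ∧
    box d p.1.1 p.1.2 ⊆ box d p.2.1 p.2.2 ∧
    (volume (box d p.2.1 p.2.2)).toReal - (volume (box d p.1.1 p.1.2)).toReal ≤ ε) ∧
  ∀ y z : Fin d → ℝ, y ∈ Set.Icc (0 : Fin d → ℝ) 1 → z ∈ Set.Icc (0 : Fin d → ℝ) 1 →
    ∃ p ∈ B, box d p.1.1 p.1.2 ⊆ box d y z ∧ box d y z ⊆ box d p.2.1 p.2.2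

/-- The bracketing number `N_[](ε, R_d, ‖·‖_{L¹})` of the family of half-open boxes in
`[0,1]^d`: the minimal cardinality of an `ε`-bracketing cover of `R_d`. -/
noncomputable def bracketingNumberR (d : ℕ) (ε : ℝ) : ℕ :=
  sInf { n : ℕ | ∃ B : Finset (((Fin d → ℝ) × (Fin d → ℝ)) × ((Fin d → ℝ) × (Fin d → ℝ))),
    IsBracketingCoverR d ε B ∧ B.card = n }

/-- For `d ≥ 3` and `ε ∈ (0,1)`, the bracketing number of the family `R_d` of half-open
axis-parallel boxes in `[0,1]^d` satisfies
`N_[](ε, R_d, ‖·‖_{L¹}) ≤ ((d^d/d!) (2/ε)^d)² = (d^d/d!)² 2^{2d} ε^{-2d}`. -/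
def goodCover (d : ℕ) (δ : ℝ) (A : Finset ((Fin d → ℝ) × (Fin d → ℝ))) : Prop :=
  (∀ p ∈ A, (∀ j, 0 ≤ p.1 j ∧ p.1 j ≤ p.2 j ∧ p.2 j ≤ 1) ∧ ∏ j, p.2 j - ∏ j, p.1 j ≤ δ) ∧
  (∀ x : Fin d → ℝ, (∀ j, 0 ≤ x j ∧ x j ≤ 1) → ∃ p ∈ A, ∀ j, p.1 j ≤ x j ∧ x j ≤ p.2 j)

noncomputable def Gbound (d : ℕ) (δ : ℝ) : ℝ :=
  (d:ℝ)^d / (Nat.factorial d) * (1/δ + (3 - (d:ℝ)) / (2*d))^d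


private lemma max_sub_max_le (x y : ℝ) (h : y ≤ x) : max x 0 - max y 0 ≤ x - y := by
  rcases le_or_gt x 0 with hx | hx
  · rcases le_or_gt y 0 with hy | hy
    · simp [max_eq_right hx, max_eq_right hy]; linarith
    · linarith
  · rcases le_or_gt y 0 with hy | hy
    · rw [max_eq_left hx.le, max_eq_right hy]; linarith
    · rw [max_eq_left hx.le, max_eq_left hy.le]

private lemma prod_sub_prod_le {ι : Type*} (s : Finset ι) (f g F G : ι → ℝ)
    (h1 : ∀ i ∈ s, 0 ≤ g i) (h2 : ∀ i ∈ s, g i ≤ f i) (h3 : ∀ i ∈ s, f i ≤ F i)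
    (h4 : ∀ i ∈ s, g i ≤ G i) (h5 : ∀ i ∈ s, f i - g i ≤ F i - G i)
    (h6 : ∀ i ∈ s, 0 ≤ G i) :
    ∏ i ∈ s, f i - ∏ i ∈ s, g i ≤ ∏ i ∈ s, F i - ∏ i ∈ s, G i := by
  induction s using Finset.cons_induction with
  | empty => simp
  | cons a s hi ih =>
    simp only [Finset.prod_cons]
    have hmem : ∀ i ∈ s, i ∈ Finset.cons a s hi := fun i hi' => Finset.mem_cons_of_mem hi'
    have hself := Finset.mem_cons_self a s (h := hi)
    have IH := ih (fun i hi' => h1 i (hmem i hi')) (fun i hi' => h2 i (hmem i hi'))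
      (fun i hi' => h3 i (hmem i hi')) (fun i hi' => h4 i (hmem i hi'))
      (fun i hi' => h5 i (hmem i hi')) (fun i hi' => h6 i (hmem i hi'))
    have hg0 : (0:ℝ) ≤ ∏ i ∈ s, g i := Finset.prod_nonneg (fun i hi' => h1 i (hmem i hi'))
    have hf0 : (0:ℝ) ≤ ∏ i ∈ s, f i :=
      Finset.prod_nonneg (fun i hi' => le_trans (h1 i (hmem i hi')) (h2 i (hmem i hi')))
    have hfF : ∏ i ∈ s, f i ≤ ∏ i ∈ s, F i :=
      Finset.prod_le_prod (fun i hi' => le_trans (h1 i (hmem i hi')) (h2 i (hmem i hi')))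
        (fun i hi' => h3 i (hmem i hi'))
    have hgf : ∏ i ∈ s, g i ≤ ∏ i ∈ s, f i :=
      Finset.prod_le_prod (fun i hi' => h1 i (hmem i hi')) (fun i hi' => h2 i (hmem i hi'))
    have e1 : f a * ∏ i ∈ s, f i - g a * ∏ i ∈ s, g i
        = (f a - g a) * ∏ i ∈ s, f i + g a * (∏ i ∈ s, f i - ∏ i ∈ s, g i) := by ring
    have e2 : F a * ∏ i ∈ s, F i - G a * ∏ i ∈ s, G i
        = (F a - G a) * ∏ i ∈ s, F i + G a * (∏ i ∈ s, F i - ∏ i ∈ s, G i) := by ring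
    rw [e1, e2]
    have t1 : (f a - g a) * ∏ i ∈ s, f i ≤ (F a - G a) * ∏ i ∈ s, F i :=
      mul_le_mul (h5 a hself) hfF hf0
        (le_trans (by linarith [h2 a hself, h1 a hself]) (h5 a hself))
    have t2 : g a * (∏ i ∈ s, f i - ∏ i ∈ s, g i) ≤ G a * (∏ i ∈ s, F i - ∏ i ∈ s, G i) :=
      mul_le_mul (h4 a hself) IH (by linarith) (h6 a hself)
    linarith

private lemma vol_box (d : ℕ) (y z : Fin d → ℝ) :
    (volume (box d y z)).toReal = ∏ j, max (z j - y j) 0 := by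
  unfold _root_.box
  rw [volume_pi_pi, ENNReal.toReal_prod]
  exact Finset.prod_congr rfl fun j _ => by rw [Real.volume_Ico, ENNReal.toReal_ofReal']

private lemma combine_weight {d : ℕ} (a b a' b' : Fin d → ℝ)
    (ha'0 : ∀ j, 0 ≤ a' j) (ha'b' : ∀ j, a' j ≤ b' j) (hb'1 : ∀ j, b' j ≤ 1)
    (ha0 : ∀ j, 0 ≤ a j) (hab : ∀ j, a j ≤ b j) (hb1 : ∀ j, b j ≤ 1) :
    ∏ j, max (b j - a' j) 0 - ∏ j, max (a j - b' j) 0 ≤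
      (∏ j, b j - ∏ j, a j) + ((∏ j, (1 - a' j)) - ∏ j, (1 - b' j)) := by
  have T1 : ∏ j, max (b j - a' j) 0 - ∏ j, max (a j - a' j) 0 ≤ ∏ j, b j - ∏ j, a j := by
    refine prod_sub_prod_le Finset.univ (fun j => max (b j - a' j) 0)
      (fun j => max (a j - a' j) 0) b a ?_ ?_ ?_ ?_ ?_ ?_
    · exact fun j _ => le_max_right _ _
    · exact fun j _ => max_le_max (by linarith [hab j]) le_rfl
    · exact fun j _ => max_le (by linarith [ha'0 j]) (by linarith [ha0 j, hab j])
    · exact fun j _ => max_le (by linarith [ha'0 j]) (ha0 j)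
    · intro j _
      have := max_sub_max_le (b j - a' j) (a j - a' j) (by linarith [hab j])
      linarith
    · exact fun j _ => ha0 j
  have T2 : ∏ j, max (a j - a' j) 0 - ∏ j, max (a j - b' j) 0 ≤
      (∏ j, (1 - a' j)) - ∏ j, (1 - b' j) := by
    refine prod_sub_prod_le Finset.univ (fun j => max (a j - a' j) 0)
      (fun j => max (a j - b' j) 0) (fun j => 1 - a' j) (fun j => 1 - b' j) ?_ ?_ ?_ ?_ ?_ ?_
    · exact fun j _ => le_max_right _ _
    · exact fun j _ => max_le_max (by linarith [ha'b' j]) le_rfl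
    · intro j _; exact max_le (by linarith [hab j, hb1 j]) (by linarith [ha'b' j, hb'1 j])
    · intro j _; exact max_le (by linarith [hab j, hb1 j]) (by linarith [hb'1 j])
    · intro j _
      have := max_sub_max_le (a j - a' j) (a j - b' j) (by linarith [ha'b' j])
      linarith
    · intro j _; linarith [hb'1 j]
  linarith

private lemma binom_lower (u e : ℝ) (hu : 0 ≤ u) (he : 0 ≤ e) (m : ℕ) :
    ((m:ℝ)+1) * (2*e) * u^m ≤ (u+e)^(m+1) - (u-e)^(m+1) := by
  have h1 : (u+e)^(m+1) = ∑ k ∈ range (m+2), u^k * e^(m+1-k) * ((m+1).choose k) :=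
    add_pow u e (m+1)
  have h2 : (u-e)^(m+1) = ∑ k ∈ range (m+2), u^k * (-e)^(m+1-k) * ((m+1).choose k) := by
    rw [sub_eq_add_neg]; exact add_pow u (-e) (m+1)
  rw [h1, h2, ← Finset.sum_sub_distrib]
  have hterm : ∀ k ∈ range (m+2),
      (0:ℝ) ≤ u^k * e^(m+1-k) * ((m+1).choose k) - u^k * (-e)^(m+1-k) * ((m+1).choose k) := by
    intro k _
    have heq : u^k * e^(m+1-k) * ((m+1).choose k) - u^k * (-e)^(m+1-k) * ((m+1).choose k)
        = u^k * (e^(m+1-k) - (-e)^(m+1-k)) * ((m+1).choose k) := by ring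
    rw [heq]
    have hd : (0:ℝ) ≤ e^(m+1-k) - (-e)^(m+1-k) := by
      rcases Nat.even_or_odd (m+1-k) with hpar | hpar
      · rw [hpar.neg_pow]; simp
      · rw [hpar.neg_pow]
        have := pow_nonneg he (m+1-k); linarith
    exact mul_nonneg (mul_nonneg (pow_nonneg hu k) hd) (Nat.cast_nonneg _)
  have hsingle := Finset.single_le_sum hterm (by simp only [Finset.mem_range]; omega : m ∈ range (m+2))
  refine le_trans (le_of_eq ?_) hsingle
  rw [Nat.choose_succ_self_right]
  have h3 : m + 1 - m = 1 := by omega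
  rw [h3]; push_cast; ring

private lemma succ_pow_ge (d : ℕ) (hd : 2 ≤ d) : (2:ℝ)^d * (Nat.factorial d) ≤ ((d:ℝ)+1)^d := by
  induction d with
  | zero => omega
  | succ n ih =>
    rcases Nat.lt_or_ge n 2 with hn | hn
    · interval_cases n
      · norm_num [Nat.factorial]
      · norm_num [Nat.factorial]
    · have IH := ih hn
      have hpos : (0:ℝ) < (n:ℝ) + 1 := by positivity
      have hb : ((n:ℝ)+1)^(n+1) * 2 ≤ ((n:ℝ)+1+1)^(n+1) := by
        have h2 : ((n:ℝ)+1+1)^(n+1) = ((n:ℝ)+1)^(n+1) * (1 + 1/((n:ℝ)+1))^(n+1) := by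
          rw [← mul_pow]; congr 1; field_simp
        rw [h2]
        have hber : (1:ℝ) + ((n:ℝ)+1) * (1/((n:ℝ)+1)) ≤ (1 + 1/((n:ℝ)+1))^(n+1) := by
          have h0 : (0:ℝ) ≤ 1/((n:ℝ)+1) := by positivity
          have := one_add_mul_le_pow (a := 1/((n:ℝ)+1)) (by linarith) (n+1)
          push_cast at this ⊢; linarith
        have he2 : (1:ℝ) + ((n:ℝ)+1) * (1/((n:ℝ)+1)) = 2 := by field_simp; norm_num
        have := pow_nonneg hpos.le (n+1)
        nlinarith
      have hfac : (Nat.factorial (n+1) : ℝ) = ((n:ℝ)+1) * (Nat.factorial n) := by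
        rw [Nat.factorial_succ]; push_cast; ring
      calc (2:ℝ)^(n+1) * (Nat.factorial (n+1))
          = (((n:ℝ)+1) * (2^n * (Nat.factorial n))) * 2 := by rw [hfac]; ring
        _ ≤ (((n:ℝ)+1) * ((n:ℝ)+1)^n) * 2 := by
            have := mul_le_mul_of_nonneg_left IH hpos.le
            nlinarith
        _ = ((n:ℝ)+1)^(n+1) * 2 := by ring
        _ ≤ ((n:ℝ)+1+1)^(n+1) := hb
        _ = ((↑(n+1):ℝ)+1)^(n+1) := by push_cast; ring

private lemma anchored_base (δ : ℝ) (h0 : 0 < δ) (h1 : δ ≤ 1) :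
    ∃ A : Finset ((Fin 1 → ℝ) × (Fin 1 → ℝ)),
      goodCover 1 δ A ∧ (A.card : ℝ) ≤ Gbound 1 δ := by
  classical
  set F : ℕ → ((Fin 1 → ℝ) × (Fin 1 → ℝ)) :=
    fun k => ((fun _ => (k:ℝ)*δ), (fun _ => min (((k:ℝ)+1)*δ) 1)) with hF
  refine ⟨(range ⌈1/δ⌉₊).image F, ⟨?_, ?_⟩, ?_⟩
  · intro p hp
    obtain ⟨k, hk, rfl⟩ := Finset.mem_image.1 hp
    have hk' : (k:ℝ) < 1/δ := by exact_mod_cast Nat.lt_ceil.1 (Finset.mem_range.1 hk)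
    have hkδ : (k:ℝ)*δ < 1 := by
      calc (k:ℝ)*δ < (1/δ)*δ := by nlinarith
        _ = 1 := by field_simp
    simp only [hF]
    refine ⟨fun j => ⟨by positivity, ?_, min_le_right _ _⟩, ?_⟩
    · exact le_min (by nlinarith) hkδ.le
    · simp only [Fin.prod_univ_one]
      have : min (((k:ℝ)+1)*δ) 1 ≤ ((k:ℝ)+1)*δ := min_le_left _ _
      nlinarith
  · intro x hx
    obtain ⟨hx0, hx1⟩ := hx 0
    have hc1 : 1 ≤ ⌈1/δ⌉₊ := by rw [Nat.one_le_ceil_iff]; positivity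
    set k : ℕ := min ⌊x 0/δ⌋₊ (⌈1/δ⌉₊ - 1) with hkdef
    refine ⟨F k, Finset.mem_image_of_mem _ (Finset.mem_range.2 (by omega)), ?_⟩
    intro j
    have hfl : (k:ℝ) ≤ x 0/δ := by
      have h1' : (k:ℕ) ≤ ⌊x 0/δ⌋₊ := min_le_left _ _
      exact le_trans (by exact_mod_cast h1') (Nat.floor_le (by positivity))
    have hxk : (k:ℝ)*δ ≤ x 0 := by
      have := (le_div_iff₀ h0).1 hfl; linarith
    have hupper : x 0 ≤ min (((k:ℝ)+1)*δ) 1 := by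
      refine le_min ?_ hx1
      rcases le_or_gt ⌊x 0/δ⌋₊ (⌈1/δ⌉₊ - 1) with hc | hc
      · have hke : k = ⌊x 0/δ⌋₊ := min_eq_left hc
        have hlt : x 0/δ < (⌊x 0/δ⌋₊:ℝ)+1 := Nat.lt_floor_add_one (x 0/δ)
        have : x 0/δ < (k:ℝ)+1 := by rw [hke]; exact_mod_cast hlt
        have := (div_lt_iff₀ h0).1 this; linarith
      · have hke : k = ⌈1/δ⌉₊ - 1 := min_eq_right (by omega)
        have hck : ((k:ℝ)+1) = (⌈1/δ⌉₊ : ℝ) := by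
          rw [hke]; push_cast [Nat.cast_sub hc1]; ring
        have hle : (1:ℝ)/δ ≤ ⌈1/δ⌉₊ := Nat.le_ceil _
        have : (1:ℝ) ≤ ((k:ℝ)+1)*δ := by
          rw [hck]
          calc (1:ℝ) = (1/δ)*δ := by field_simp
            _ ≤ (⌈1/δ⌉₊:ℝ)*δ := by nlinarith
        linarith
    have hj : j = 0 := Subsingleton.elim j 0
    rw [hj]
    exact ⟨hxk, hupper⟩
  · have hcard : ((range ⌈1/δ⌉₊).image F).card ≤ ⌈1/δ⌉₊ :=
      le_trans Finset.card_image_le (le_of_eq (Finset.card_range _))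
    have h2 : (⌈1/δ⌉₊ : ℝ) ≤ 1/δ + 1 := by
      have := Nat.ceil_lt_add_one (by positivity : (0:ℝ) ≤ 1/δ)
      linarith
    have h3 : Gbound 1 δ = 1/δ + 1 := by
      unfold Gbound; norm_num [Nat.factorial]
    rw [h3]
    exact le_trans (by exact_mod_cast hcard) h2

private lemma prod_snoc_eq {n : ℕ} (f : Fin n → ℝ) (x : ℝ) :
    (∏ i, Fin.snoc f x i) = (∏ i, f i) * x := by
  rw [Fin.prod_univ_castSucc]
  simp [Fin.snoc_castSucc, Fin.snoc_last]

private lemma Gbound_succ (m : ℕ) (δ : ℝ) (hδ : 0 < δ) :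
    Gbound (m+1) δ = (((m:ℝ)+1)^(m+1)/(Nat.factorial (m+1)))/δ^(m+1) *
      (1+δ*((2 - (m:ℝ))/(2*((m:ℝ)+1))))^(m+1) := by
  unfold Gbound
  push_cast
  have hm1 : (0:ℝ) < (m:ℝ)+1 := by positivity
  have e4 : 1/δ + (3 - ((m:ℝ)+1))/(2*((m:ℝ)+1)) = (1+δ*((2 - (m:ℝ))/(2*((m:ℝ)+1))))/δ := by
    field_simp; ring
  rw [e4, div_pow]
  ring

private lemma anchored_step (n : ℕ)
    (IH : ∀ δ : ℝ, 0 < δ → δ ≤ 1 →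
      ∃ A : Finset ((Fin (n+1) → ℝ) × (Fin (n+1) → ℝ)),
        goodCover (n+1) δ A ∧ (A.card : ℝ) ≤ Gbound (n+1) δ) :
    ∀ δ : ℝ, 0 < δ → δ ≤ 1 →
      ∃ A : Finset ((Fin (n+2) → ℝ) × (Fin (n+2) → ℝ)),
        goodCover (n+2) δ A ∧ (A.card : ℝ) ≤ Gbound (n+2) δ := by
  classical
  intro δ h0 h1
  set m : ℕ := n + 1 with hm
  have hmR : (1:ℝ) ≤ (m:ℝ) := by exact_mod_cast Nat.one_le_iff_ne_zero.2 (by omega)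
  set h : ℝ := δ / (m+1) with hh
  have hhpos : 0 < h := by positivity
  have hδh : 0 < δ - h := by
    have : h < δ := by rw [hh]; apply div_lt_self h0; linarith
    linarith
  set M : ℕ := ⌈(1-δ)/h⌉₊ with hM
  set T : ℕ → ℝ := fun k => 1 - (k:ℝ)*h with hT
  have hTmono : ∀ {i j : ℕ}, i ≤ j → T j ≤ T i := by
    intro i j hij
    simp only [hT]
    have : (i:ℝ) ≤ (j:ℝ) := by exact_mod_cast hij
    nlinarith
  have hTM_le : T M ≤ δ := by
    have hle := Nat.le_ceil ((1-δ)/h)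
    rw [div_le_iff₀ hhpos] at hle
    simp only [hT]
    linarith [hle]
  have hTM_gt : δ - h < T M := by
    have := Nat.ceil_lt_add_one (div_nonneg (by linarith) hhpos.le : (0:ℝ) ≤ (1-δ)/h)
    simp only [hT, hM]
    have h2 : (⌈(1-δ)/h⌉₊:ℝ) * h < ((1-δ)/h + 1) * h := by
      apply mul_lt_mul_of_pos_right this hhpos
    have h3 : ((1-δ)/h + 1) * h = (1-δ) + h := by field_simp
    nlinarith [h2, h3]
  have hTpos : ∀ k ≤ M, 0 < T k := fun k hk => lt_of_lt_of_le (lt_trans hδh hTM_gt) (hTmono hk)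
  set δ' : ℕ → ℝ := fun k => (δ - h)/(T (k+1)) with hδ'
  have hδ'pos : ∀ k < M, 0 < δ' k := by
    intro k hk
    exact div_pos hδh (hTpos (k+1) (by omega))
  have hδ'le : ∀ k < M, δ' k ≤ 1 := by
    intro k hk
    rw [hδ', div_le_one (hTpos (k+1) (by omega))]
    exact le_trans hTM_gt.le (hTmono (by omega))
  -- choose the sub-covers
  clear_value h T M δ'
  have H : ∀ k : ℕ, ∃ A' : Finset ((Fin (n+1) → ℝ) × (Fin (n+1) → ℝ)),
      k < M → goodCover (n+1) (δ' k) A' ∧ ((A'.card : ℝ) ≤ Gbound (n+1) (δ' k)) := by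
    intro k
    by_cases hk : k < M
    · obtain ⟨A', hA'⟩ := IH (δ' k) (hδ'pos k hk) (hδ'le k hk)
      exact ⟨A', fun _ => hA'⟩
    · exact ⟨∅, fun hc => absurd hc hk⟩
  choose A' hA' using H
  set ext : ℕ → ((Fin (n+1) → ℝ) × (Fin (n+1) → ℝ)) → ((Fin (n+2) → ℝ) × (Fin (n+2) → ℝ)) :=
    fun k p => (Fin.snoc p.1 (T (k+1)), Fin.snoc p.2 (T k)) with hext
  set bottom : (Fin (n+2) → ℝ) × (Fin (n+2) → ℝ) :=
    ((fun _ => 0), Fin.snoc (fun _ => 1) (T M)) with hbot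
  set A : Finset ((Fin (n+2) → ℝ) × (Fin (n+2) → ℝ)) :=
    insert bottom ((range M).biUnion fun k => (A' k).image (ext k)) with hA
  refine ⟨A, ⟨?_, ?_⟩, ?_⟩
  · -- bounds and weight
    intro p hp
    rw [hA, Finset.mem_insert] at hp
    rcases hp with hp | hp
    · subst hp
      constructor
      · intro j
        refine ⟨le_refl 0, ?_, ?_⟩
        · refine Fin.lastCases ?_ ?_ j
          · simp only [hbot, Fin.snoc_last]
            exact (hTpos M le_rfl).le
          · intro i; simp only [hbot, Fin.snoc_castSucc]; norm_num
        · refine Fin.lastCases ?_ ?_ j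
          · simp only [hbot, Fin.snoc_last]; linarith
          · intro i; simp only [hbot, Fin.snoc_castSucc]; exact le_rfl
      · simp only [hbot, prod_snoc_eq]
        simp only [Finset.prod_const, Finset.card_univ, Fintype.card_fin]
        rw [zero_pow (by omega : n + 2 ≠ 0), one_pow]
        linarith
    · rw [Finset.mem_biUnion] at hp
      obtain ⟨k, hkM, hp⟩ := hp
      rw [Finset.mem_image] at hp
      obtain ⟨q, hq, rfl⟩ := hp
      have hkM' : k < M := Finset.mem_range.1 hkM
      obtain ⟨hbnd, hcov⟩ := (hA' k hkM').1
      have hqb := hbnd q hq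
      have hq1 : ∀ j, 0 ≤ q.1 j := fun j => (hqb.1 j).1
      have hq12 : ∀ j, q.1 j ≤ q.2 j := fun j => (hqb.1 j).2.1
      have hq2 : ∀ j, q.2 j ≤ 1 := fun j => (hqb.1 j).2.2
      constructor
      · intro j
        refine Fin.lastCases ?_ ?_ j
        · simp only [hext, Fin.snoc_last]
          refine ⟨(hTpos (k+1) (by omega)).le, hTmono (by omega), ?_⟩
          simp only [hT]
          nlinarith [mul_nonneg (Nat.cast_nonneg k : (0:ℝ) ≤ (k:ℝ)) hhpos.le]
        · intro i
          simp only [hext, Fin.snoc_castSucc]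
          exact ⟨hq1 i, hq12 i, hq2 i⟩
      · simp only [hext, prod_snoc_eq]
        have hTk : T k = T (k+1) + h := by simp only [hT]; push_cast; ring
        have hw := hqb.2
        have hprod2 : ∏ j, q.2 j ≤ 1 :=
          Finset.prod_le_one (fun j _ => le_trans (hq1 j) (hq12 j)) (fun j _ => hq2 j)
        have hT1pos' := hTpos (k+1) (by omega)
        have hδ'eq : T (k+1) * δ' k = δ - h := by
          simp only [hδ']
          rw [mul_comm, div_mul_cancel₀ _ (ne_of_gt hT1pos')]
        have hT1pos := hTpos (k+1) (by omega)
        calc (∏ j, q.2 j) * T k - (∏ j, q.1 j) * T (k+1)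
            = T (k+1) * ((∏ j, q.2 j) - (∏ j, q.1 j)) + h * (∏ j, q.2 j) := by
              rw [hTk]; ring
          _ ≤ T (k+1) * δ' k + h * 1 := by
              have t1 : T (k+1) * ((∏ j, q.2 j) - (∏ j, q.1 j)) ≤ T (k+1) * δ' k :=
                mul_le_mul_of_nonneg_left hw hT1pos.le
              have t2 : h * (∏ j, q.2 j) ≤ h * 1 := mul_le_mul_of_nonneg_left hprod2 hhpos.le
              linarith
          _ = δ := by rw [hδ'eq]; ring
  · -- coverage
    intro x hx
    set t : ℝ := x (Fin.last (n+1)) with ht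
    have hxt := hx (Fin.last (n+1))
    rcases le_or_gt t (T M) with hcase | hcase
    · refine ⟨bottom, by rw [hA]; exact Finset.mem_insert_self _ _, ?_⟩
      intro j
      refine Fin.lastCases ?_ ?_ j
      · simp only [hbot, Fin.snoc_last]
        exact ⟨(hx _).1, hcase⟩
      · intro i
        simp only [hbot, Fin.snoc_castSucc]
        exact ⟨(hx _).1, (hx _).2⟩
    · have hM1 : 1 ≤ M := by
        by_contra hc
        have : M = 0 := by omega
        rw [this] at hcase
        simp only [hT] at hcase
        push_cast at hcase
        linarith [hxt.2]
      set k : ℕ := min ⌊(1-t)/h⌋₊ (M-1) with hk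
      have hkM : k < M := by omega
      obtain ⟨hbnd, hcov⟩ := (hA' k hkM).1
      obtain ⟨q, hqA, hqcov⟩ := hcov (fun i => x i.castSucc) (fun i => hx i.castSucc)
      refine ⟨ext k q, ?_, ?_⟩
      · rw [hA]
        apply Finset.mem_insert_of_mem
        rw [Finset.mem_biUnion]
        exact ⟨k, Finset.mem_range.2 hkM, Finset.mem_image_of_mem _ hqA⟩
      · intro j
        refine Fin.lastCases ?_ ?_ j
        · simp only [hext, Fin.snoc_last, ← ht]
          constructor
          · -- T (k+1) ≤ t
            have : 1 - t ≤ ((k:ℝ)+1)*h := by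
              rcases le_or_gt ⌊(1-t)/h⌋₊ (M-1) with hc | hc
              · have hke : k = ⌊(1-t)/h⌋₊ := min_eq_left hc
                have hlt : (1-t)/h < (⌊(1-t)/h⌋₊:ℝ)+1 := Nat.lt_floor_add_one _
                rw [← hke] at hlt
                have := (div_lt_iff₀ hhpos).1 hlt
                linarith
              · have hke : k = M - 1 := min_eq_right (by omega)
                have hkk : ((k:ℝ)+1) = (M:ℝ) := by
                  rw [hke]; push_cast [Nat.cast_sub hM1]; ring
                rw [hkk]
                have : T M < t := hcase
                simp only [hT] at this
                linarith
            simp only [hT]; push_cast; linarith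
          · -- t ≤ T k
            have hfl : (k:ℝ) ≤ (1-t)/h := by
              have h1' : (k:ℕ) ≤ ⌊(1-t)/h⌋₊ := min_le_left _ _
              refine le_trans (by exact_mod_cast h1') (Nat.floor_le ?_)
              exact div_nonneg (by linarith [hxt.2]) hhpos.le
            have := (le_div_iff₀ hhpos).1 hfl
            simp only [hT]; linarith
        · intro i
          simp only [hext, Fin.snoc_castSucc]
          exact hqcov i
  · -- cardinality
    have hm0 : (m:ℝ) ≠ 0 := by positivity
    have hmp : (0:ℝ) < (m:ℝ) := by linarith
    have hm1p : (0:ℝ) < (m:ℝ)+1 := by linarith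
    have hfacm : (0:ℝ) < (Nat.factorial m : ℝ) := by exact_mod_cast Nat.factorial_pos m
    have hmh : ((m:ℝ)+1)*h = δ := by rw [hh]; field_simp
    have hδh_eq : δ - h = δ*(m:ℝ)/((m:ℝ)+1) := by rw [hh]; field_simp; ring
    set cD : ℝ := (2 - (m:ℝ))/(2*((m:ℝ)+1)) with hcD
    clear_value cD
    set γ : ℝ := δ*(3 - (m:ℝ))/(2*((m:ℝ)+1)) with hγ
    clear_value γ
    have hγc : (3 - (m:ℝ))/(2*(m:ℝ)) * (δ - h) = γ := by
      rw [hδh_eq, hγ]; field_simp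
    have hA2 : γ - h/2 = δ*cD := by rw [hγ, hcD, hh]; field_simp; ring
    set p0 : ℝ := δ*((m:ℝ)+2)/(2*((m:ℝ)+1)) with hp0
    clear_value p0
    have hp0pos : 0 < p0 := by rw [hp0]; positivity
    have hpmin : ∀ k ≤ M, p0 ≤ T k + γ - h/2 := by
      intro k hk
      have t1 : T M ≤ T k := hTmono hk
      have t2 : δ - h < T M := hTM_gt
      have t3 : (δ - h) + γ - h/2 = p0 := by
        rw [hδh_eq, hγ, hp0, hh]; field_simp; ring
      linarith
    set φ : ℕ → ℝ := fun k => (T k + γ - h/2)^(m+1) with hφ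
    clear_value φ
    set Qm : ℝ := (m:ℝ)^m/(Nat.factorial m) with hQm
    clear_value Qm
    set QD : ℝ := ((m:ℝ)+1)^(m+1)/(Nat.factorial (m+1)) with hQD
    clear_value QD
    have hQmpos : 0 < Qm := by rw [hQm]; positivity
    have hQDpos : 0 < QD := by
      rw [hQD]
      have : (0:ℝ) < (Nat.factorial (m+1) : ℝ) := by exact_mod_cast Nat.factorial_pos (m+1)
      positivity
    have hδhne : (δ - h) ≠ 0 := ne_of_gt hδh
    have hδhpow : (0:ℝ) < (δ-h)^m := pow_pos hδh m
    -- natural number cardinality bound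
    have hcard1 : (A.card : ℝ) ≤ 1 + ∑ k ∈ range M, ((A' k).card : ℝ) := by
      have c1 : A.card ≤ ((range M).biUnion fun k => (A' k).image (ext k)).card + 1 := by
        rw [hA]; exact Finset.card_insert_le _ _
      have c2 : ((range M).biUnion fun k => (A' k).image (ext k)).card
          ≤ ∑ k ∈ range M, ((A' k).image (ext k)).card := Finset.card_biUnion_le
      have c3 : ∑ k ∈ range M, ((A' k).image (ext k)).card ≤ ∑ k ∈ range M, (A' k).card :=
        Finset.sum_le_sum (fun k _ => Finset.card_image_le)
      have : A.card ≤ 1 + ∑ k ∈ range M, (A' k).card := by omega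
      calc (A.card : ℝ) ≤ ((1 + ∑ k ∈ range M, (A' k).card : ℕ) : ℝ) := by exact_mod_cast this
        _ = 1 + ∑ k ∈ range M, ((A' k).card : ℝ) := by push_cast; ring
    -- identify Gbound m (δ' k)
    have hGb : ∀ k ∈ range M, Gbound m (δ' k) = Qm * ((T (k+1) + γ)^m/(δ-h)^m) := by
      intro k hk
      have hkM' := Finset.mem_range.1 hk
      have hTpos' := hTpos (k+1) (by omega)
      unfold Gbound
      rw [← hQm]
      congr 1
      have e1 : 1/δ' k = T (k+1)/(δ - h) := by rw [hδ']; exact one_div_div _ _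
      have e2 : T (k+1)/(δ-h) + (3-(m:ℝ))/(2*(m:ℝ)) = (T (k+1) + γ)/(δ-h) := by
        have e3 : (3-(m:ℝ))/(2*(m:ℝ)) = γ/(δ-h) := by
          rw [← hγc, mul_div_assoc, div_self hδhne, mul_one]
        rw [e3, ← add_div]
      rw [e1, e2, div_pow]
    -- per-layer power bound
    have per : ∀ k ∈ range M, (T (k+1) + γ)^m ≤ (φ k - φ (k+1))/(((m:ℝ)+1)*h) := by
      intro k hk
      have hkM' := Finset.mem_range.1 hk
      have humin := hpmin (k+1) (by omega)
      have hu : 0 ≤ T (k+1) + γ := by linarith [hhpos, hp0pos]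
      have hbin := binom_lower (T (k+1) + γ) (h/2) hu (by linarith [hhpos.le]) m
      have e1 : T (k+1) + γ + h/2 = T k + γ - h/2 := by
        simp only [hT]; push_cast; ring
      rw [e1] at hbin
      rw [le_div_iff₀ (mul_pos (by positivity : (0:ℝ) < (m:ℝ)+1) hhpos)]
      have eφ1 : φ k = (T k + γ - h/2)^(m+1) := by rw [hφ]
      have eφ2 : φ (k+1) = (T (k+1) + γ - h/2)^(m+1) := by rw [hφ]
      rw [eφ1, eφ2]
      have e3 : ((m:ℝ)+1)*(2*(h/2)) = ((m:ℝ)+1)*h := by ring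
      rw [e3] at hbin
      linarith
    -- sum of telescoping terms
    have htel : ∑ k ∈ range M, (φ k - φ (k+1)) = φ 0 - φ M := Finset.sum_range_sub' φ M
    have hsum2 : ∑ k ∈ range M, (T (k+1) + γ)^m ≤ (φ 0 - φ M)/(((m:ℝ)+1)*h) := by
      calc ∑ k ∈ range M, (T (k+1) + γ)^m
          ≤ ∑ k ∈ range M, (φ k - φ (k+1))/(((m:ℝ)+1)*h) := Finset.sum_le_sum per
        _ = (∑ k ∈ range M, (φ k - φ (k+1)))/(((m:ℝ)+1)*h) := by rw [Finset.sum_div]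
        _ = (φ 0 - φ M)/(((m:ℝ)+1)*h) := by rw [htel]
    have hsumG : ∑ k ∈ range M, Gbound m (δ' k)
        ≤ Qm/(δ-h)^m * ((φ 0 - φ M)/(((m:ℝ)+1)*h)) := by
      calc ∑ k ∈ range M, Gbound m (δ' k)
          = ∑ k ∈ range M, Qm * ((T (k+1) + γ)^m/(δ-h)^m) := Finset.sum_congr rfl hGb
        _ = Qm/(δ-h)^m * ∑ k ∈ range M, (T (k+1) + γ)^m := by
            rw [Finset.mul_sum]
            exact Finset.sum_congr rfl (fun k _ => by ring)
        _ ≤ Qm/(δ-h)^m * ((φ 0 - φ M)/(((m:ℝ)+1)*h)) := by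
            apply mul_le_mul_of_nonneg_left hsum2
            positivity
    -- the coefficient identity
    have hfacD : (Nat.factorial (m+1) : ℝ) = ((m:ℝ)+1)*(Nat.factorial m) := by
      rw [Nat.factorial_succ]; push_cast; ring
    have hKD : Qm/(δ-h)^m/(((m:ℝ)+1)*h) = QD/δ^(m+1) := by
      rw [hmh, hQm, hQD, hfacD, hδh_eq, div_pow, mul_pow]
      field_simp
      ring
    -- final assembly
    have hφ0 : φ 0 = (1+δ*cD)^(m+1) := by
      have e0 : T 0 + γ - h/2 = 1 + δ*cD := by
        simp only [hT]; push_cast; linarith [hA2]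
      simp only [hφ]; rw [e0]
    have hφM_ge : p0^(m+1) ≤ φ M := by
      simp only [hφ]
      exact pow_le_pow_left₀ hp0pos.le (hpmin M le_rfl) (m+1)
    have hone : 1 ≤ QD/δ^(m+1) * φ M := by
      have key := succ_pow_ge (m+1) (by omega)
      have hkey : (2:ℝ)^(m+1) * (Nat.factorial (m+1)) ≤ ((m:ℝ)+2)^(m+1) := by
        have e : ((m+1:ℕ):ℝ)+1 = (m:ℝ)+2 := by push_cast; ring
        rw [e] at key; exact key
      have hfD : (0:ℝ) < (Nat.factorial (m+1):ℝ) := by exact_mod_cast Nat.factorial_pos (m+1)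
      have ep : p0 = δ * (((m:ℝ)+2)/(2*((m:ℝ)+1))) := by rw [hp0]; ring
      have hδp : (0:ℝ) < δ^(m+1) := by positivity
      have e7 : QD/δ^(m+1) * p0^(m+1) = QD * (((m:ℝ)+2)/(2*((m:ℝ)+1)))^(m+1) := by
        rw [ep, mul_pow]
        calc QD/δ^(m+1) * (δ^(m+1) * (((m:ℝ)+2)/(2*((m:ℝ)+1)))^(m+1))
            = QD * (((m:ℝ)+2)/(2*((m:ℝ)+1)))^(m+1) * (δ^(m+1)/δ^(m+1)) := by ring
          _ = QD * (((m:ℝ)+2)/(2*((m:ℝ)+1)))^(m+1) := by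
              rw [div_self (ne_of_gt hδp), mul_one]
      have e8 : 1 ≤ QD * (((m:ℝ)+2)/(2*((m:ℝ)+1)))^(m+1) := by
        rw [hQD, div_pow, div_mul_div_comm,
          le_div_iff₀ (mul_pos hfD (by positivity : (0:ℝ) < (2*((m:ℝ)+1))^(m+1)))]
        have h9 := mul_le_mul_of_nonneg_left hkey
          (by positivity : (0:ℝ) ≤ ((m:ℝ)+1)^(m+1))
        calc (1:ℝ) * ((Nat.factorial (m+1):ℝ) * (2*((m:ℝ)+1))^(m+1))
            = ((m:ℝ)+1)^(m+1) * ((2:ℝ)^(m+1) * (Nat.factorial (m+1))) := by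
              rw [mul_pow]; ring
          _ ≤ ((m:ℝ)+1)^(m+1) * ((m:ℝ)+2)^(m+1) := h9
      have h2 : QD * (((m:ℝ)+2)/(2*((m:ℝ)+1)))^(m+1) ≤ QD/δ^(m+1) * φ M := by
        rw [← e7]
        exact mul_le_mul_of_nonneg_left hφM_ge (div_nonneg hQDpos.le hδp.le)
      linarith
    have hGD : Gbound (m+1) δ = QD/δ^(m+1) * (1+δ*cD)^(m+1) := by
      rw [hQD, hcD]
      exact Gbound_succ m δ h0
    have hsumA : ∑ k ∈ range M, ((A' k).card : ℝ) ≤ ∑ k ∈ range M, Gbound m (δ' k) :=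
      Finset.sum_le_sum (fun k hk => (hA' k (Finset.mem_range.1 hk)).2)
    have e5 : Qm/(δ-h)^m * ((φ 0 - φ M)/(((m:ℝ)+1)*h))
        = (Qm/(δ-h)^m/(((m:ℝ)+1)*h))*(φ 0 - φ M) := by ring
    have e6 : (QD/δ^(m+1))*(φ 0 - φ M) = (QD/δ^(m+1))*(φ 0) - (QD/δ^(m+1))*(φ M) := by ring
    have hfin : (A.card:ℝ) ≤ (QD/δ^(m+1))*(φ 0) := by
      rw [e5, hKD] at hsumG
      linarith only [hcard1, hsumA, hsumG, hone, e6]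
    have hfinal : (A.card:ℝ) ≤ Gbound (m+1) δ := by
      calc (A.card:ℝ) ≤ (QD/δ^(m+1))*(φ 0) := hfin
        _ = Gbound (m+1) δ := by rw [hGD, hφ0]
    have hdim : Gbound (m+1) δ = Gbound (n+2) δ := by rw [hm]
    rw [← hdim]
    exact hfinal

private lemma anchored_cover (n : ℕ) : ∀ δ : ℝ, 0 < δ → δ ≤ 1 →
    ∃ A : Finset ((Fin (n+1) → ℝ) × (Fin (n+1) → ℝ)),
      goodCover (n+1) δ A ∧ (A.card : ℝ) ≤ Gbound (n+1) δ := by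
  induction n with
  | zero => exact fun δ h0 h1 => anchored_base δ h0 h1
  | succ k ih => exact anchored_step k ih

private lemma anchored_cover' (d : ℕ) (hd : 1 ≤ d) (δ : ℝ) (h0 : 0 < δ) (h1 : δ ≤ 1) :
    ∃ A : Finset ((Fin d → ℝ) × (Fin d → ℝ)),
      goodCover d δ A ∧ (A.card : ℝ) ≤ Gbound d δ := by
  obtain ⟨n, rfl⟩ : ∃ n, d = n + 1 := ⟨d - 1, by omega⟩
  exact anchored_cover n δ h0 h1

theorem bracketingNumberR_le (d : ℕ) (hd : 3 ≤ d) (ε : ℝ) (hε : ε ∈ Set.Ioo (0 : ℝ) 1) :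
    (bracketingNumberR d ε : ℝ) ≤ ((d : ℝ) ^ d / (Nat.factorial d) * (2 / ε) ^ d) ^ 2 ∧
    ((d : ℝ) ^ d / (Nat.factorial d) * (2 / ε) ^ d) ^ 2 =
      ((d : ℝ) ^ d / (Nat.factorial d)) ^ 2 * 2 ^ (2 * d) * (1 / ε) ^ (2 * d) := by
  classical
  obtain ⟨hε0, hε1⟩ := hε
  have halg : ((d : ℝ) ^ d / (Nat.factorial d) * (2 / ε) ^ d) ^ 2 =
      ((d : ℝ) ^ d / (Nat.factorial d)) ^ 2 * 2 ^ (2 * d) * (1 / ε) ^ (2 * d) := by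
    have h2 : (2/ε : ℝ) = 2 * (1/ε) := by ring
    rw [mul_pow, ← pow_mul, mul_comm d 2, h2, mul_pow]
    ring
  refine ⟨?_, halg⟩
  -- construct the bracketing cover
  obtain ⟨A, ⟨hAbnd, hAcov⟩, hAcard⟩ :=
    anchored_cover' d (by omega) (ε/2) (by linarith) (by linarith)
  set B : Finset (((Fin d → ℝ) × (Fin d → ℝ)) × ((Fin d → ℝ) × (Fin d → ℝ))) :=
    (A ×ˢ A).image (fun pq =>
      ((fun j => 1 - pq.2.1 j, pq.1.1), (fun j => 1 - pq.2.2 j, pq.1.2))) with hB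
  have hcover : IsBracketingCoverR d ε B := by
    constructor
    · intro p hp
      rw [hB, Finset.mem_image] at hp
      obtain ⟨pq, hmem, rfl⟩ := hp
      rw [Finset.mem_product] at hmem
      obtain ⟨hz, hy⟩ := hmem
      obtain ⟨hzb, hzw⟩ := hAbnd _ hz
      obtain ⟨hyb, hyw⟩ := hAbnd _ hy
      have hz1 : ∀ j, 0 ≤ pq.1.1 j := fun j => (hzb j).1
      have hz12 : ∀ j, pq.1.1 j ≤ pq.1.2 j := fun j => (hzb j).2.1
      have hz2 : ∀ j, pq.1.2 j ≤ 1 := fun j => (hzb j).2.2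
      have hy1 : ∀ j, 0 ≤ pq.2.1 j := fun j => (hyb j).1
      have hy12 : ∀ j, pq.2.1 j ≤ pq.2.2 j := fun j => (hyb j).2.1
      have hy2 : ∀ j, pq.2.2 j ≤ 1 := fun j => (hyb j).2.2
      refine ⟨?_, ?_, ?_, ?_, ?_, ?_⟩
      · rw [Set.mem_Icc]
        constructor <;> (rw [Pi.le_def]; intro j)
        · simp only [Pi.zero_apply]; linarith [hy2 j, hy12 j]
        · simp only [Pi.one_apply]; linarith [hy1 j, hy12 j]
      · rw [Set.mem_Icc]
        exact ⟨by rw [Pi.le_def]; intro j; simpa using hz1 j,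
          by rw [Pi.le_def]; intro j; simpa using le_trans (hz12 j) (hz2 j)⟩
      · rw [Set.mem_Icc]
        constructor <;> (rw [Pi.le_def]; intro j)
        · simp only [Pi.zero_apply]; linarith [hy2 j]
        · simp only [Pi.one_apply]; linarith [hy1 j, hy12 j]
      · rw [Set.mem_Icc]
        exact ⟨by rw [Pi.le_def]; intro j; simpa using le_trans (hz1 j) (hz12 j),
          by rw [Pi.le_def]; intro j; simpa using hz2 j⟩
      · unfold _root_.box
        apply Set.pi_mono
        intro j _
        exact Set.Ico_subset_Ico (by dsimp only; linarith [hy12 j]) (hz12 j)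
      · rw [vol_box, vol_box]
        have hcw := combine_weight pq.1.1 pq.1.2
          (fun j => 1 - pq.2.2 j) (fun j => 1 - pq.2.1 j)
          (fun j => show (0:ℝ) ≤ 1 - pq.2.2 j by linarith [hy2 j])
          (fun j => show 1 - pq.2.2 j ≤ 1 - pq.2.1 j by linarith [hy12 j])
          (fun j => show 1 - pq.2.1 j ≤ (1:ℝ) by linarith [hy1 j])
          hz1 hz12 hz2
        have e1 : ∏ j, (1 - (1 - pq.2.2 j)) = ∏ j, pq.2.2 j :=
          Finset.prod_congr rfl (fun j _ => by ring)
        have e2 : ∏ j, (1 - (1 - pq.2.1 j)) = ∏ j, pq.2.1 j :=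
          Finset.prod_congr rfl (fun j _ => by ring)
        rw [e1, e2] at hcw
        calc ∏ j, max (pq.1.2 j - (1 - pq.2.2 j)) 0 - ∏ j, max (pq.1.1 j - (1 - pq.2.1 j)) 0
            ≤ (∏ j, pq.1.2 j - ∏ j, pq.1.1 j) + ((∏ j, pq.2.2 j) - ∏ j, pq.2.1 j) := hcw
          _ ≤ ε/2 + ε/2 := add_le_add hzw hyw
          _ = ε := by ring
    · intro y z hy hz
      rw [Set.mem_Icc] at hy hz
      have hy0 : ∀ j, 0 ≤ y j := fun j => hy.1 j
      have hy1 : ∀ j, y j ≤ 1 := fun j => hy.2 j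
      have hz0 : ∀ j, 0 ≤ z j := fun j => hz.1 j
      have hz1 : ∀ j, z j ≤ 1 := fun j => hz.2 j
      obtain ⟨qz, hqzA, hqzcov⟩ := hAcov z (fun j => ⟨hz0 j, hz1 j⟩)
      obtain ⟨qy, hqyA, hqycov'⟩ := hAcov (fun j => 1 - y j)
        (fun j => ⟨by linarith [hy1 j], by linarith [hy0 j]⟩)
      have hqycov : ∀ j, qy.1 j ≤ 1 - y j ∧ 1 - y j ≤ qy.2 j := hqycov'
      refine ⟨((fun j => 1 - qy.1 j, qz.1), (fun j => 1 - qy.2 j, qz.2)), ?_, ?_, ?_⟩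
      · rw [hB]
        exact Finset.mem_image_of_mem _ (a := (qz, qy)) (by rw [Finset.mem_product]; exact ⟨hqzA, hqyA⟩)
      · unfold _root_.box
        apply Set.pi_mono
        intro j _
        exact Set.Ico_subset_Ico (by dsimp only; linarith [(hqycov j).1])
          ((hqzcov j).1)
      · unfold _root_.box
        apply Set.pi_mono
        intro j _
        exact Set.Ico_subset_Ico (by dsimp only; linarith [(hqycov j).2])
          ((hqzcov j).2)
  -- cardinality
  have hXpos : (0:ℝ) ≤ (d:ℝ)^d/(Nat.factorial d) * (2/ε)^d := by
    have : (0:ℝ) ≤ 2/ε := by positivity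
    have hf : (0:ℝ) < (Nat.factorial d : ℝ) := by exact_mod_cast Nat.factorial_pos d
    positivity
  have hGnonneg : (0:ℝ) ≤ Gbound d (ε/2) := le_trans (Nat.cast_nonneg _) hAcard
  have hG : Gbound d (ε/2) ≤ (d:ℝ)^d/(Nat.factorial d) * (2/ε)^d := by
    unfold Gbound
    have hf : (0:ℝ) < (Nat.factorial d : ℝ) := by exact_mod_cast Nat.factorial_pos d
    apply mul_le_mul_of_nonneg_left _ (by positivity)
    have hde : (1:ℝ)/(ε/2) = 2/ε := one_div_div ε 2
    have hdpos : (0:ℝ) < (d:ℝ) := by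
      have : (3:ℝ) ≤ (d:ℝ) := by exact_mod_cast hd
      linarith
    have hcneg : (3 - (d:ℝ))/(2*d) ≤ 0 := by
      apply div_nonpos_of_nonpos_of_nonneg
      · have : (3:ℝ) ≤ (d:ℝ) := by exact_mod_cast hd
        linarith
      · linarith
    have hclow : (-1:ℝ)/2 ≤ (3 - (d:ℝ))/(2*d) := by
      rw [div_le_div_iff₀ (by norm_num) (by linarith)]
      have : (3:ℝ) ≤ (d:ℝ) := by exact_mod_cast hd
      nlinarith
    have h2ε : (2:ℝ) ≤ 2/ε := by
      rw [le_div_iff₀ hε0]; linarith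
    apply pow_le_pow_left₀
    · rw [hde]; linarith
    · rw [hde]; linarith
  have hBcard : (B.card : ℝ) ≤ ((d:ℝ)^d/(Nat.factorial d) * (2/ε)^d)^2 := by
    have c1 : B.card ≤ A.card * A.card := by
      rw [hB]
      calc ((A ×ˢ A).image _).card ≤ (A ×ˢ A).card := Finset.card_image_le
        _ = A.card * A.card := Finset.card_product A A
    calc (B.card : ℝ) ≤ (A.card : ℝ) * (A.card : ℝ) := by exact_mod_cast c1
      _ ≤ Gbound d (ε/2) * Gbound d (ε/2) :=
          mul_le_mul hAcard hAcard (Nat.cast_nonneg _) hGnonneg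
      _ ≤ ((d:ℝ)^d/(Nat.factorial d) * (2/ε)^d) * ((d:ℝ)^d/(Nat.factorial d) * (2/ε)^d) :=
          mul_le_mul hG hG hGnonneg hXpos
      _ = ((d:ℝ)^d/(Nat.factorial d) * (2/ε)^d)^2 := (sq _).symm
  have hsinf : bracketingNumberR d ε ≤ B.card := Nat.sInf_le ⟨B, hcover, rfl⟩
  calc (bracketingNumberR d ε : ℝ) ≤ (B.card : ℝ) := by exact_mod_cast hsinf
    _ ≤ _ := hBcard
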